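/- Let $n > 1$ be an integer and $\delta \in (0, 1/2)$. Then there exists an $n \times n$ complex matrix $A$ with strictly positive entries whose columns each sum to $1$, such that the operator norm of $A$ (as an operator on $\ell^2$ of $n$ points) satisfies $\|A\| > \sqrt{n} - \delta$. -/

import Mathlib

open scoped ComplexOrder

theorem stmt_0 (n : ℕ) (hn : 1 < n) (δ : ℝ) (hδ : δ ∈ Set.Ioo (0:ℝ) (1/2)) :
    ∃ A : Matrix (Fin n) (Fin n) ℂ,
      (∀ i j, 0 < A i j) ∧
      (∀ j, ∑ i, A i j = 1) ∧
      Real.sqrt n - δ < ‖Matrix.toEuclideanCLM (𝕜 := ℂ) A‖ := by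
  obtain ⟨hδ0, hδ2⟩ := hδ
  have hn0 : (0:ℝ) < n := by positivity
  have hn1 : (1:ℝ) < n := by exact_mod_cast hn
  have hsn : Real.sqrt n < n := by
    nlinarith [Real.sq_sqrt hn0.le, Real.sqrt_nonneg (n:ℝ)]
  have hsn0 : 0 < Real.sqrt n := Real.sqrt_pos.mpr hn0
  obtain ⟨ε, hε0, hεn, hεδ⟩ :
      ∃ ε : ℝ, 0 < ε ∧ (n:ℝ) * ε < 1 ∧ Real.sqrt n * ((n:ℝ) - 1) * ε < δ := by
    refine ⟨δ / (n^2), by positivity, ?_, ?_⟩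
    · rw [← mul_div_assoc, div_lt_one (by positivity)]
      nlinarith
    · have h4 : Real.sqrt n * ((n:ℝ)-1) < n^2 := by nlinarith
      calc Real.sqrt n * ((n:ℝ)-1) * (δ / n^2)
          < n^2 * (δ / n^2) := by
            apply mul_lt_mul_of_pos_right h4 (by positivity)
        _ = δ := by field_simp
  set c : ℝ := 1 - n * ε with hc
  have hc0 : 0 < c + ε := by nlinarith
  let z : Fin n := ⟨0, by omega⟩
  set A : Matrix (Fin n) (Fin n) ℂ :=
    fun i _ => ((ε + if i = z then c else 0 : ℝ) : ℂ) with hA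
  refine ⟨A, ?_, ?_, ?_⟩
  · intro i j
    rw [hA]
    simp only
    rw [Complex.zero_lt_real]
    split <;> nlinarith
  · intro j
    rw [hA]
    simp only
    rw [← Complex.ofReal_sum]
    norm_cast
    rw [Finset.sum_add_distrib, Finset.sum_ite_eq' Finset.univ z (fun _ => c)]
    simp [Finset.card_univ, hc]
  · set x : EuclideanSpace ℂ (Fin n) := (WithLp.equiv 2 _).symm (fun _ => (1:ℂ)) with hx
    have hxnorm : ‖x‖ = Real.sqrt n := by
      rw [EuclideanSpace.norm_eq]
      simp [hx, Finset.card_univ]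
    set v : Fin n → ℂ := A.mulVec (fun _ => (1:ℂ)) with hv
    have hAx : Matrix.toEuclideanCLM (𝕜 := ℂ) A x = (WithLp.equiv 2 _).symm v := by
      rw [hx]; rfl
    have hcoord : v z = ((n * (ε + c) : ℝ) : ℂ) := by
      rw [hv]
      simp [Matrix.mulVec, dotProduct, hA, Finset.card_univ]
      push_cast
      ring
    have hnormAx : (n * (ε + c) : ℝ) ≤ ‖Matrix.toEuclideanCLM (𝕜 := ℂ) A x‖ := by
      rw [hAx, EuclideanSpace.norm_eq]
      have h1 : ‖v z‖^2 ≤ ∑ i, ‖v i‖^2 :=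
        Finset.single_le_sum (f := fun i => ‖v i‖^2) (fun i _ => by positivity)
          (Finset.mem_univ z)
      have h0 : (n * (ε + c) : ℝ) = ‖v z‖ := by
        rw [hcoord, Complex.norm_real, Real.norm_of_nonneg (by nlinarith)]
      rw [h0, ← Real.sqrt_sq (norm_nonneg (v z))]
      exact Real.sqrt_le_sqrt (by simpa using h1)
    have hle := (Matrix.toEuclideanCLM (𝕜 := ℂ) A).le_opNorm x
    rw [hxnorm] at hle
    have h2 : (n * (ε + c) : ℝ) ≤ ‖Matrix.toEuclideanCLM (𝕜 := ℂ) A‖ * Real.sqrt n :=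
      hnormAx.trans hle
    have h3 : (n:ℝ) * (ε + c) = Real.sqrt n * Real.sqrt n * (1 - ((n:ℝ)-1)*ε) := by
      rw [Real.mul_self_sqrt hn0.le, hc]; ring
    have key : Real.sqrt n * (1 - ((n:ℝ)-1) * ε) ≤ ‖Matrix.toEuclideanCLM (𝕜 := ℂ) A‖ := by
      rw [h3] at h2
      rw [← mul_le_mul_iff_of_pos_right hsn0]
      calc Real.sqrt n * (1 - ((n:ℝ)-1)*ε) * Real.sqrt n
          = Real.sqrt n * Real.sqrt n * (1 - ((n:ℝ)-1)*ε) := by ring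
        _ ≤ _ := h2
    refine lt_of_lt_of_le ?_ key
    nlinarith
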